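/- arXiv:math/0304229 — 2 statements merged into one kernel-verified Lean document; each statement's English description precedes it below -/
import Mathlib

section
/- For 1 ≤ d1 ≤ d and k ≥ d1, the sum of P(α)² over all monotone lattice paths α from (0,0) to (k,d1) (with steps east and northeast, where each northeast step from height j has weight 1 - j/d and each east step at height j has weight j/d, and P(α) is the product of the edge weights) equals (2·d!²)/((d-d1)!² d^{2k} (2d1)!) · Σ_{m=1}^{d1} (-1)^{d1-m} C(2d1, d1+m) m^{2k}. -/
/-- For a lattice path encoded by `s : Fin k → Bool` (`true` = northeast step,
`false` = east step), `height s i` is the height (number of distinct coupons) just before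
step `i`. -/
def height {k : ℕ} (s : Fin k → Bool) (i : Fin k) : ℕ :=
  (Finset.univ.filter fun j : Fin k => j < i ∧ s j = true).card

/-- The probability weight of step `i` of the path `s`, for a collector of `d` kinds:
a northeast step from height `j` has weight `1 - j/d`, an east step at height `j` has
weight `j/d`. -/
noncomputable def stepWeight (d : ℕ) {k : ℕ} (s : Fin k → Bool) (i : Fin k) : ℝ :=
  if s i then 1 - (height s i : ℝ) / (d : ℝ) else (height s i : ℝ) / (d : ℝ)

open Finset


noncomputable def A (N m : ℕ) : ℝ :=
  ∑ j ∈ range (N+1), (-1:ℝ)^j * (N.choose j : ℝ) * (j:ℝ)^m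

lemma A_zero (N : ℕ) : A N 0 = if N = 0 then 1 else 0 := by
  have h := @Int.alternating_sum_range_choose N
  have h2 : A N 0 = ((∑ m ∈ range (N + 1), (-1:ℤ) ^ m * (N.choose m) : ℤ) : ℝ) := by
    push_cast [A]; simp
  rw [h2, h]; split <;> simp

lemma A_rec (N m : ℕ) (hm : m ≠ 0) :
    A (N+1) m = -((N:ℝ)+1) * ∑ t ∈ range m, ((m-1).choose t : ℝ) * A N t := by
  obtain ⟨m', rfl⟩ := Nat.exists_eq_succ_of_ne_zero hm
  have step : ∀ i : ℕ, (-1:ℝ)^(i+1) * ((N+1).choose (i+1) : ℝ) * ((i:ℝ)+1)^(m'+1)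
      = -((N:ℝ)+1) * ∑ t ∈ range (m'+1), ((m').choose t : ℝ) * ((-1:ℝ)^i * (N.choose i : ℝ) * (i:ℝ)^t) := by
    intro i
    have hkey : ((N:ℝ)+1) * (N.choose i : ℝ) = ((N+1).choose (i+1) : ℝ) * ((i:ℝ)+1) := by
      exact_mod_cast congrArg (Nat.cast (R := ℝ)) (Nat.add_one_mul_choose_eq N i)
    have hexp : ((i:ℝ)+1)^m' = ∑ t ∈ range (m'+1), (i:ℝ)^t * ((m').choose t : ℝ) := by
      have := add_pow (i:ℝ) 1 m'
      simpa using this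
    calc (-1:ℝ)^(i+1) * ((N+1).choose (i+1) : ℝ) * ((i:ℝ)+1)^(m'+1)
        = (-1:ℝ)^(i+1) * (((N+1).choose (i+1) : ℝ) * ((i:ℝ)+1)) * ((i:ℝ)+1)^m' := by ring
      _ = (-1:ℝ)^(i+1) * (((N:ℝ)+1) * (N.choose i : ℝ)) * ((i:ℝ)+1)^m' := by rw [hkey]
      _ = -((N:ℝ)+1) * ((-1:ℝ)^i * (N.choose i : ℝ) * ∑ t ∈ range (m'+1), (i:ℝ)^t * ((m').choose t : ℝ)) := by
          rw [← hexp]; ring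
      _ = _ := by
          rw [Finset.mul_sum, Finset.mul_sum, Finset.mul_sum]
          exact Finset.sum_congr rfl fun t _ => by ring
  have : A (N+1) (m'+1) = ∑ i ∈ range (N+1),
      (-1:ℝ)^(i+1) * ((N+1).choose (i+1) : ℝ) * ((i:ℝ)+1)^(m'+1) := by
    rw [A, Finset.sum_range_succ']
    simp
  rw [this]
  have swap : ∑ i ∈ range (N+1), -((N:ℝ)+1) * ∑ t ∈ range (m'+1), ((m').choose t : ℝ) * ((-1:ℝ)^i * (N.choose i : ℝ) * (i:ℝ)^t)
      = -((N:ℝ)+1) * ∑ t ∈ range (m'+1), ((m').choose t : ℝ) * A N t := by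
    rw [← Finset.mul_sum, Finset.sum_comm]
    congr 1
    apply Finset.sum_congr rfl
    intro t _
    rw [← Finset.mul_sum]
    rfl
  rw [Finset.sum_congr rfl fun i _ => step i, swap]
  simp

lemma A_lt : ∀ N m, m < N → A N m = 0 := by
  intro N
  induction N with
  | zero => intro m hm; omega
  | succ N ih =>
    intro m hm
    rcases Nat.eq_zero_or_pos m with rfl | hm0
    · rw [A_zero]; simp
    · rw [A_rec N m (by omega)]
      have : ∀ t ∈ range m, ((m-1).choose t : ℝ) * A N t = 0 := by
        intro t ht
        rw [ih t (by simp at ht; omega), mul_zero]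
      rw [Finset.sum_congr rfl this]
      simp

lemma A_diag : ∀ N, A N N = (-1:ℝ)^N * (N.factorial : ℝ) := by
  intro N
  induction N with
  | zero => simp [A]
  | succ N ih =>
    rw [A_rec N (N+1) (by omega)]
    simp only [Nat.add_sub_cancel]
    have : ∑ t ∈ range (N+1), ((N).choose t : ℝ) * A N t
        = ((N).choose N : ℝ) * A N N := by
      rw [Finset.sum_range_succ]
      have : ∀ t ∈ range N, ((N).choose t : ℝ) * A N t = 0 := by
        intro t ht
        rw [A_lt N t (by simpa using ht), mul_zero]
      rw [Finset.sum_congr rfl this]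
      simp
    rw [this, ih]
    simp [Nat.factorial_succ]
    push_cast
    ring

lemma alt_shift (N : ℕ) (c : ℝ) :
    ∑ j ∈ range (N+1), (-1:ℝ)^j * (N.choose j : ℝ) * ((j:ℝ)+c)^N
      = (-1:ℝ)^N * (N.factorial : ℝ) := by
  have expand : ∀ j : ℕ, (-1:ℝ)^j * (N.choose j : ℝ) * ((j:ℝ)+c)^N
      = ∑ t ∈ range (N+1), (N.choose t : ℝ) * c^(N-t) * ((-1:ℝ)^j * (N.choose j : ℝ) * (j:ℝ)^t) := by
    intro j
    rw [add_pow, Finset.mul_sum]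
    apply Finset.sum_congr rfl
    intro t _
    ring
  rw [Finset.sum_congr rfl fun j _ => expand j, Finset.sum_comm]
  have : ∀ t ∈ range (N+1), ∑ j ∈ range (N+1), (N.choose t : ℝ) * c^(N-t) * ((-1:ℝ)^j * (N.choose j : ℝ) * (j:ℝ)^t)
      = (N.choose t : ℝ) * c^(N-t) * A N t := by
    intro t _
    rw [← Finset.mul_sum]
    rfl
  rw [Finset.sum_congr rfl this, Finset.sum_range_succ]
  have z : ∀ t ∈ range N, (N.choose t : ℝ) * c^(N-t) * A N t = 0 := by
    intro t ht
    rw [A_lt N t (by simpa using ht), mul_zero]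
  rw [Finset.sum_congr rfl z, A_diag]
  simp

noncomputable def S (n k : ℕ) : ℝ :=
  ∑ m ∈ Icc 1 n, (-1:ℝ)^(n-m) * ((2*n).choose (n+m) : ℝ) * (m:ℝ)^(2*k)

lemma sign_shift (a b : ℕ) : (-1:ℝ)^(a + 2*b) = (-1:ℝ)^a := by
  rw [pow_add, pow_mul]
  simp

lemma S_diag (n : ℕ) (hn : 1 ≤ n) : S n n = ((2*n).factorial : ℝ) / 2 := by
  set f : ℕ → ℝ := fun j => (-1:ℝ)^j * ((2*n).choose j : ℝ) * ((j:ℝ) - n)^(2*n) with hf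
  have F : ∑ j ∈ range (2*n+1), f j = ((2*n).factorial : ℝ) := by
    have := alt_shift (2*n) (-(n:ℝ))
    simp only [← sub_eq_add_neg] at this
    rw [hf, this, pow_mul]
    simp
  have split : ∑ j ∈ range (2*n+1), f j
      = (∑ j ∈ range (n+1), f j) + ∑ x ∈ range n, f (n+1+x) := by
    have h : 2*n+1 = (n+1) + n := by omega
    rw [h, Finset.sum_range_add]
  have fn : f n = 0 := by
    simp only [hf]
    rw [sub_self, zero_pow (by omega)]
    ring
  have low : ∑ j ∈ range (n+1), f j = ∑ x ∈ range n, f (n+1+x) := by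
    rw [Finset.sum_range_succ, fn, add_zero, ← Finset.sum_range_reflect]
    apply Finset.sum_congr rfl
    intro j hj
    simp only [Finset.mem_range] at hj
    have key : f (n-1-j) = f (n+1+j) := by
      simp only [hf]
      have hc : (2*n).choose (n-1-j) = (2*n).choose (n+1+j) := by
        rw [show n-1-j = 2*n - (n+1+j) by omega]
        exact Nat.choose_symm (by omega)
      have hs : (-1:ℝ)^(n+1+j) = (-1:ℝ)^(n-1-j) := by
        rw [show n+1+j = (n-1-j) + 2*(j+1) by omega, sign_shift]
      have hv : (((n-1-j : ℕ):ℝ) - n)^(2*n) = (((n+1+j : ℕ):ℝ) - n)^(2*n) := by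
        have h1 : ((n-1-j : ℕ):ℝ) = (n:ℝ) - 1 - j := by
          have : (n - 1 - j) + (1 + j) = n := by omega
          have := congrArg (Nat.cast (R := ℝ)) this
          push_cast at this
          linarith
        have h2 : ((n+1+j : ℕ):ℝ) = (n:ℝ) + 1 + j := by push_cast; ring
        rw [h1, h2]
        have e : (n:ℝ) - 1 - j - n = -((n:ℝ) + 1 + j - n) := by ring
        rw [e, Even.neg_pow (even_two_mul n)]
      rw [hc, hs, hv]
    exact key
  have Seq : S n n = ∑ x ∈ range n, f (n+1+x) := by
    rw [S, show Icc 1 n = Ico 1 (n+1) by rfl, Finset.sum_Ico_eq_sum_range]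
    simp only [Nat.add_sub_cancel]
    apply Finset.sum_congr rfl
    intro i hi
    simp only [Finset.mem_range] at hi
    simp only [hf]
    have hs : (-1:ℝ)^(n+1+i) = (-1:ℝ)^(n-(1+i)) := by
      rw [show n+1+i = (n-(1+i)) + 2*(i+1) by omega, sign_shift]
    have hv : (((n+1+i : ℕ):ℝ) - n)^(2*n) = (((1+i:ℕ)):ℝ)^(2*n) := by
      push_cast
      ring_nf
    rw [show n+(1+i) = n+1+i by omega, hs, hv]
  rw [Seq, ← F, split, low]
  ring

lemma choose_key (n m : ℕ) (hm : m ≤ n) :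
    (n+1+m) * (n+1-m) * ((2*n+2).choose (n+1+m))
      = (2*n+2) * (2*n+1) * ((2*n).choose (n+m)) := by
  have h1 : (2*n+2) * ((2*n+1).choose (n+m)) = (2*n+2).choose (n+1+m) * (n+1+m) := by
    have := Nat.add_one_mul_choose_eq (2*n+1) (n+m)
    simpa [Nat.succ_eq_add_one, show 2*n+1+1 = 2*n+2 by omega, show n+m+1 = n+1+m by omega] using this
  have h2 : (2*n+1) * ((2*n).choose (n-m)) = (2*n+1).choose (n+1-m) * (n+1-m) := by
    have := Nat.add_one_mul_choose_eq (2*n) (n-m)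
    simpa [Nat.succ_eq_add_one, show n-m+1 = n+1-m by omega] using this
  have s1 : (2*n+1).choose (n+m) = (2*n+1).choose (n+1-m) := by
    rw [show n+1-m = 2*n+1 - (n+m) by omega]
    exact (Nat.choose_symm (by omega)).symm
  have s2 : (2*n).choose (n-m) = (2*n).choose (n+m) := by
    rw [show n-m = 2*n - (n+m) by omega]
    exact Nat.choose_symm (by omega)
  calc (n+1+m) * (n+1-m) * ((2*n+2).choose (n+1+m))
      = (n+1-m) * ((2*n+2).choose (n+1+m) * (n+1+m)) := by ring
    _ = (n+1-m) * ((2*n+2) * ((2*n+1).choose (n+m))) := by rw [h1]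
    _ = (2*n+2) * ((2*n+1).choose (n+1-m) * (n+1-m)) := by rw [s1]; ring
    _ = (2*n+2) * ((2*n+1) * ((2*n).choose (n-m))) := by rw [h2]
    _ = (2*n+2) * (2*n+1) * ((2*n).choose (n+m)) := by rw [s2]; ring

lemma S_rec (n k : ℕ) (hn : 1 ≤ n) :
    S n (k+1) = (n:ℝ)^2 * S n k + (2*(n:ℝ)) * (2*(n:ℝ)-1) * S (n-1) k := by
  obtain ⟨n', rfl⟩ : ∃ n', n = n' + 1 := ⟨n - 1, by omega⟩
  simp only [Nat.add_sub_cancel]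
  have expand : S (n'+1) (k+1) - ((n'+1:ℕ):ℝ)^2 * S (n'+1) k
      = ∑ m ∈ Icc 1 (n'+1), (-1:ℝ)^(n'+1-m) * ((2*(n'+1)).choose (n'+1+m) : ℝ) * (m:ℝ)^(2*k)
          * ((m:ℝ)^2 - ((n'+1:ℕ):ℝ)^2) := by
    rw [S, S, Finset.mul_sum, ← Finset.sum_sub_distrib]
    apply Finset.sum_congr rfl
    intro m _
    have : (m:ℝ)^(2*(k+1)) = (m:ℝ)^(2*k) * (m:ℝ)^2 := by
      rw [← pow_add]; ring_nf
    rw [this]; ring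
  have top : (-1:ℝ)^(n'+1-(n'+1)) * ((2*(n'+1)).choose (n'+1+(n'+1)) : ℝ) * ((n'+1:ℕ):ℝ)^(2*k)
      * (((n'+1:ℕ):ℝ)^2 - ((n'+1:ℕ):ℝ)^2) = 0 := by ring
  have main : ∀ m ∈ Icc 1 n',
      (-1:ℝ)^(n'+1-m) * ((2*(n'+1)).choose (n'+1+m) : ℝ) * (m:ℝ)^(2*k)
          * ((m:ℝ)^2 - ((n'+1:ℕ):ℝ)^2)
      = (2*((n'+1:ℕ):ℝ)) * (2*((n'+1:ℕ):ℝ)-1)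
          * ((-1:ℝ)^(n'-m) * ((2*n').choose (n'+m) : ℝ) * (m:ℝ)^(2*k)) := by
    intro m hm
    simp only [Finset.mem_Icc] at hm
    have key := choose_key n' m hm.2
    have keyR : ((n':ℝ)+1+m) * ((n':ℝ)+1-m) * ((2*n'+2).choose (n'+1+m) : ℝ)
        = (2*(n':ℝ)+2) * (2*(n':ℝ)+1) * ((2*n').choose (n'+m) : ℝ) := by
      have hc : ((n'+1-m:ℕ):ℝ) = (n':ℝ)+1-m := by
        have : (n'+1-m) + m = n'+1 := by omega
        have := congrArg (Nat.cast (R := ℝ)) this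
        push_cast at this
        linarith
      have := congrArg (Nat.cast (R := ℝ)) key
      push_cast at this
      rw [hc] at this
      linarith
    have hsign : (-1:ℝ)^(n'+1-m) = -(-1:ℝ)^(n'-m) := by
      rw [show n'+1-m = (n'-m)+1 by omega, pow_succ]
      ring
    have hval : ((m:ℝ)^2 - ((n'+1:ℕ):ℝ)^2) = -(((n':ℝ)+1+m) * ((n':ℝ)+1-m)) := by
      push_cast; ring
    rw [hsign, hval, show 2*(n'+1) = 2*n'+2 by ring]
    push_cast
    linear_combination ((-1:ℝ)^(n'-m) * (m:ℝ)^(2*k)) * keyR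
  rw [Finset.sum_Icc_succ_top (show (1:ℕ) ≤ n'+1 by omega)] at expand
  rw [top, add_zero] at expand
  rw [Finset.sum_congr rfl main, ← Finset.mul_sum] at expand
  rw [show (∑ m ∈ Icc 1 n', (-1:ℝ)^(n'-m) * ((2*n').choose (n'+m) : ℝ) * (m:ℝ)^(2*k)) = S n' k from rfl] at expand
  push_cast at expand ⊢
  linarith [expand]

def cnt {k : ℕ} (s : Fin k → Bool) : ℕ := (Finset.univ.filter fun i => s i = true).card

noncomputable def T (d n k : ℕ) : ℝ :=
  ∑ s ∈ Finset.univ.filter (fun s : Fin k → Bool => cnt s = n),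
    (∏ i : Fin k, stepWeight d s i) ^ 2

lemma cnt_snoc {k : ℕ} (t : Fin k → Bool) (b : Bool) :
    cnt (Fin.snoc t b) = cnt t + (if b then 1 else 0) := by
  rw [cnt, cnt, Finset.card_filter, Finset.card_filter, Fin.sum_univ_castSucc]
  simp [Fin.snoc_castSucc, Fin.snoc_last]

lemma height_snoc_castSucc {k : ℕ} (t : Fin k → Bool) (b : Bool) (i : Fin k) :
    height (Fin.snoc t b) i.castSucc = height t i := by
  rw [height, height, Finset.card_filter, Finset.card_filter, Fin.sum_univ_castSucc]
  have h1 : ¬ (Fin.last k < i.castSucc) := (Fin.castSucc_lt_last i).asymm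
  simp [Fin.snoc_castSucc, Fin.castSucc_lt_castSucc_iff, h1]

lemma height_snoc_last {k : ℕ} (t : Fin k → Bool) (b : Bool) :
    height (Fin.snoc t b) (Fin.last k) = cnt t := by
  rw [height, cnt, Finset.card_filter, Finset.card_filter, Fin.sum_univ_castSucc]
  simp [Fin.snoc_castSucc, Fin.castSucc_lt_last, lt_irrefl]

lemma prod_snoc (d : ℕ) {k : ℕ} (t : Fin k → Bool) (b : Bool) :
    ∏ i : Fin (k+1), stepWeight d (Fin.snoc t b) i
      = (∏ i : Fin k, stepWeight d t i)
        * (if b then 1 - (cnt t : ℝ) / d else (cnt t : ℝ) / d) := by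
  rw [Fin.prod_univ_castSucc]
  congr 1
  · apply Finset.prod_congr rfl
    intro i _
    rw [stepWeight, stepWeight, height_snoc_castSucc, Fin.snoc_castSucc]
  · rw [stepWeight, height_snoc_last, Fin.snoc_last]

lemma sum_snoc_eq {k : ℕ} (f : (Fin (k+1) → Bool) → ℝ) :
    ∑ s : Fin (k+1) → Bool, f s = ∑ t : Fin k → Bool, (f (Fin.snoc t true) + f (Fin.snoc t false)) := by
  rw [← (Fin.snocEquiv (fun _ => Bool)).sum_comp f]
  rw [Fintype.sum_prod_type]
  rw [Fintype.sum_bool]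
  rw [← Finset.sum_add_distrib]
  apply Finset.sum_congr rfl
  intro t _
  rfl

lemma T_rec (d n k : ℕ) (hn : 1 ≤ n) :
    T d n (k+1) = ((n:ℝ)/d)^2 * T d n k + (1 - ((n-1:ℕ):ℝ)/d)^2 * T d (n-1) k := by
  rw [T, Finset.sum_filter, sum_snoc_eq]
  have term : ∀ t : Fin k → Bool,
      ((if cnt (Fin.snoc t true) = n then (∏ i : Fin (k+1), stepWeight d (Fin.snoc t true) i)^2 else 0)
        + (if cnt (Fin.snoc t false) = n then (∏ i : Fin (k+1), stepWeight d (Fin.snoc t false) i)^2 else 0))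
      = (1 - ((n-1:ℕ):ℝ)/d)^2 * (if cnt t = n - 1 then (∏ i : Fin k, stepWeight d t i)^2 else 0)
        + ((n:ℝ)/d)^2 * (if cnt t = n then (∏ i : Fin k, stepWeight d t i)^2 else 0) := by
    intro t
    rw [cnt_snoc, cnt_snoc, prod_snoc, prod_snoc]
    simp only [show (false = true) = False by simp, show (true = true) = True by simp,
      if_true, if_false, add_zero]
    congr 1
    · by_cases h : cnt t = n - 1
      · rw [if_pos (by omega), if_pos h, h]
        ring
      · rw [if_neg (by omega), if_neg h, mul_zero]
    · by_cases h : cnt t = n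
      · rw [if_pos h, if_pos h, h]
        ring
      · rw [if_neg h, if_neg h, mul_zero]
  rw [Finset.sum_congr rfl (fun t _ => term t), Finset.sum_add_distrib, ← Finset.mul_sum, ← Finset.mul_sum]
  rw [T, T, Finset.sum_filter, Finset.sum_filter]
  ring

lemma T_zero (d k : ℕ) (hk : 1 ≤ k) : T d 0 k = 0 := by
  rw [T]
  apply Finset.sum_eq_zero
  intro s hs
  simp only [Finset.mem_filter, Finset.mem_univ, true_and] at hs
  simp only [cnt] at hs
  have hfalse : ∀ j, ¬ s j = true := by
    intro j hj
    have hmem : j ∈ Finset.univ.filter fun i => s i = true := by simp [hj]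
    rw [Finset.card_eq_zero.mp hs] at hmem
    exact absurd hmem (Finset.notMem_empty j)
  have i0 : Fin k := ⟨0, hk⟩
  have hw : stepWeight d s i0 = 0 := by
    rw [stepWeight, if_neg (hfalse i0)]
    have hh : height s i0 = 0 := by
      rw [height, Finset.card_eq_zero]
      apply Finset.filter_eq_empty_iff.mpr
      intro j _
      rintro ⟨-, hj⟩
      exact hfalse j hj
    rw [hh]; simp
  rw [Finset.prod_eq_zero (Finset.mem_univ i0) hw]
  ring

lemma T_diag (d k : ℕ) : T d k k = (∏ j ∈ range k, (1 - (j:ℝ)/d))^2 := by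
  rw [T]
  have hfilter : (Finset.univ.filter (fun s : Fin k → Bool => cnt s = k))
      = {fun _ => true} := by
    ext s
    simp only [Finset.mem_filter, Finset.mem_univ, true_and, Finset.mem_singleton]
    simp only [cnt]
    constructor
    · intro h
      funext i
      have : Finset.univ.filter (fun i => s i = true) = Finset.univ := by
        apply Finset.eq_univ_of_card
        rw [h, Fintype.card_fin]
      have := Finset.mem_filter.mp (this ▸ Finset.mem_univ i)
      exact this.2
    · rintro rfl
      simp [Finset.filter_true_of_mem]
  rw [hfilter, Finset.sum_singleton]
  congr 1
  rw [← Fin.prod_univ_eq_prod_range (fun j => 1 - (j:ℝ)/d) k]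
  apply Finset.prod_congr rfl
  intro i _
  rw [stepWeight, if_pos rfl]
  congr 2
  rw [height]
  have : (Finset.univ.filter fun j : Fin k => j < i ∧ (fun _ => true) j = true)
      = Finset.Iio i := by
    ext j; simp
  rw [this, Fin.card_Iio]

lemma prod_eval (d k : ℕ) (hk : k ≤ d) (hd : 1 ≤ d) :
    ∏ j ∈ range k, (1 - (j:ℝ)/d) = (d.descFactorial k : ℝ) / (d:ℝ)^k := by
  have hd0 : (d:ℝ) ≠ 0 := by positivity
  have : ∀ j ∈ range k, (1 - (j:ℝ)/d) = ((d - j : ℕ) : ℝ) / d := by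
    intro j hj
    simp only [Finset.mem_range] at hj
    have : ((d - j : ℕ) : ℝ) = (d:ℝ) - j := by
      have h := congrArg (Nat.cast (R := ℝ)) (Nat.sub_add_cancel (by omega : j ≤ d))
      push_cast at h
      linarith
    rw [this]
    field_simp
  rw [Finset.prod_congr rfl this, Finset.prod_div_distrib, Finset.prod_const]
  rw [Nat.descFactorial_eq_prod_range]
  push_cast
  simp [Finset.card_range]

lemma main_lemma (d : ℕ) : ∀ k n, 1 ≤ n → n ≤ d → n ≤ k →
    T d n k = 2 * (d.factorial:ℝ)^2 /
        (((d-n).factorial:ℝ)^2 * (d:ℝ)^(2*k) * ((2*n).factorial:ℝ)) * S n k := by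
  intro k
  induction k with
  | zero => intro n h1 _ h3; omega
  | succ k ih =>
    intro n h1 h2 h3
    have hd1 : 1 ≤ d := le_trans h1 h2
    have hd0 : (d:ℝ) ≠ 0 := by positivity
    have hfacdn : (((d-n).factorial:ℝ)) ≠ 0 := by
      exact_mod_cast (Nat.factorial_ne_zero _)
    have hfac2n : (((2*n).factorial:ℝ)) ≠ 0 := by
      exact_mod_cast (Nat.factorial_ne_zero _)
    by_cases hnk : n = k + 1
    · subst hnk
      rw [T_diag, prod_eval d (k+1) h2 hd1, S_diag (k+1) (by omega)]
      have hdf : (((d-(k+1)).factorial : ℕ):ℝ) * ((d.descFactorial (k+1) : ℕ):ℝ)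
          = ((d.factorial : ℕ):ℝ) := by
        exact_mod_cast congrArg (Nat.cast (R := ℝ)) (Nat.factorial_mul_descFactorial h2)
      have hpow : (d:ℝ)^(2*(k+1)) = ((d:ℝ)^(k+1))^2 := by
        rw [← pow_mul]; ring_nf
    -- goal: (desc/d^{k+1})^2 = 2 d!^2/((d-n)!^2 d^{2(k+1)} (2n)!) * ((2n)!/2)
      rw [hpow, div_pow, ← hdf]
      field_simp
    · have h3' : n ≤ k := by omega
      rw [T_rec d n k h1, S_rec n k h1, ih n h1 h2 h3']
      by_cases hn1 : n = 1
      · subst hn1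
        rw [T_zero d k (by omega)]
        have hS0 : S 0 k = 0 := by rw [S]; simp
        simp only [Nat.sub_self, hS0]
        have hpow : (d:ℝ)^(2*(k+1)) = (d:ℝ)^(2*k) * (d:ℝ)^2 := by
          rw [← pow_add]; ring_nf
        rw [hpow]
        field_simp
        ring_nf
      · have hm2 : 2 ≤ n := by omega
        rw [ih (n-1) (by omega) (by omega) (by omega)]
        have hc1 : ((n-1:ℕ):ℝ) = (n:ℝ) - 1 := by
          have h := congrArg (Nat.cast (R := ℝ)) (Nat.sub_add_cancel h1)
          push_cast at h; linarith
        have hc2 : ((d-(n-1)).factorial:ℝ) = ((d:ℝ)-(n:ℝ)+1) * ((d-n).factorial:ℝ) := by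
          have e : d-(n-1) = (d-n)+1 := by omega
          rw [e, Nat.factorial_succ]
          have h : ((d-n:ℕ):ℝ) = (d:ℝ)-(n:ℝ) := by
            have h := congrArg (Nat.cast (R := ℝ)) (Nat.sub_add_cancel h2)
            push_cast at h; linarith
          push_cast
          rw [h]
        have hc3 : ((2*n).factorial:ℝ)
            = (2*(n:ℝ)) * (2*(n:ℝ)-1) * ((2*(n-1)).factorial:ℝ) := by
          have e : 2*n = (2*(n-1)+1)+1 := by omega
          rw [e, Nat.factorial_succ, Nat.factorial_succ]
          push_cast [hc1]
          ring
        have hpow : (d:ℝ)^(2*(k+1)) = (d:ℝ)^(2*k) * (d:ℝ)^2 := by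
          rw [← pow_add]; ring_nf
        have hfacd1 : (((d-(n-1)).factorial:ℝ)) ≠ 0 := by
          exact_mod_cast (Nat.factorial_ne_zero _)
        have hfac2n1 : (((2*(n-1)).factorial:ℝ)) ≠ 0 := by
          exact_mod_cast (Nat.factorial_ne_zero _)
        have hne1 : (d:ℝ) - (n:ℝ) + 1 ≠ 0 := by
          have : (n:ℝ) ≤ (d:ℝ) := by exact_mod_cast h2
          linarith
        have hne2 : 2*(n:ℝ) - 1 ≠ 0 := by
          have : (1:ℝ) ≤ (n:ℝ) := by exact_mod_cast h1
          linarith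
        have ca : 2 * (d.factorial:ℝ)^2 / (((d-n).factorial:ℝ)^2 * ((d:ℝ)^(2*k) * (d:ℝ)^2) * ((2*n).factorial:ℝ)) * (n:ℝ)^2
            = ((n:ℝ)/d)^2 * (2 * (d.factorial:ℝ)^2 / (((d-n).factorial:ℝ)^2 * (d:ℝ)^(2*k) * ((2*n).factorial:ℝ))) := by
          field_simp
        have cb : 2 * (d.factorial:ℝ)^2 / (((d-n).factorial:ℝ)^2 * ((d:ℝ)^(2*k) * (d:ℝ)^2) * ((2*n).factorial:ℝ)) * (2*(n:ℝ)*(2*(n:ℝ)-1))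
            = (1 - ((n-1:ℕ):ℝ)/d)^2 * (2 * (d.factorial:ℝ)^2 / (((d-(n-1)).factorial:ℝ)^2 * (d:ℝ)^(2*k) * ((2*(n-1)).factorial:ℝ))) := by
          have hn0 : (n:ℝ) ≠ 0 := by positivity
          rw [hc1, hc2, hc3]
          field_simp [hne1, hne2]
          ring
        rw [hpow]
        linear_combination (-(S n k)) * ca - (S (n-1) k) * cb

/-- For `1 ≤ d1 ≤ d` and `k ≥ d1`, the sum of `P(α)²` over all monotone lattice paths `α`
from `(0,0)` to `(k,d1)` equals
`(2 d!²)/((d-d1)!² d^{2k} (2d1)!) Σ_{m=1}^{d1} (-1)^{d1-m} C(2d1, d1+m) m^{2k}`. -/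

theorem squared_path_sum (d d1 k : ℕ) (hd1 : 1 ≤ d1) (hd : d1 ≤ d) (hk : d1 ≤ k) :
    ∑ s ∈ Finset.univ.filter
        (fun s : Fin k → Bool => (Finset.univ.filter fun i => s i = true).card = d1),
        (∏ i : Fin k, stepWeight d s i) ^ 2
      = 2 * (Nat.factorial d : ℝ) ^ 2 /
          ((Nat.factorial (d - d1) : ℝ) ^ 2 * (d : ℝ) ^ (2 * k) *
            (Nat.factorial (2 * d1) : ℝ)) *
          ∑ m ∈ Finset.Icc 1 d1,
            (-1 : ℝ) ^ (d1 - m) * (Nat.choose (2 * d1) (d1 + m) : ℝ) * (m : ℝ) ^ (2 * k) := by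
  have h := main_lemma d k d1 hd1 hd hk
  rw [T, S] at h
  simp only [cnt] at h
  exact h
end

section
/- In the coupon collector problem with d kinds where the collector stops upon having at least h copies of every kind, the probability of stopping at exactly trial n is p_n = (d!/d^n) · C(n-1, h-1) · S_{≥h}(n-h, d-1), where S_{≥h}(m,k) counts partitions of an m-set into k blocks each of size at least h. -/
set_option linter.unusedSectionVars false

open Finset

section Core
variable {α β : Type*} [Fintype α] [DecidableEq α] [Fintype β] [DecidableEq β]

private def cls (g : α → β) (b : β) : Finset α := univ.filter fun a => g a = b

@[simp] private lemma mem_cls {g : α → β} {b : β} {a : α} : a ∈ cls g b ↔ g a = b := by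
  simp [cls]

private lemma natCard_fiber_eq (g : α → β) (b : β) :
    Nat.card {a // g a = b} = (cls g b).card := by
  rw [Nat.card_eq_fintype_card, Fintype.card_subtype]; rfl

private instance kerDec (g : α → β) : DecidableRel ⇑(Setoid.ker g) :=
  fun a b => decidable_of_iff (g a = g b) Iff.rfl

private noncomputable def fpart (g : α → β) : Finpartition (univ : Finset α) :=
  Finpartition.ofSetoid (Setoid.ker g)

private lemma part_fpart (g : α → β) (a : α) : (fpart g).part a = cls g (g a) := by
  ext b
  rw [show fpart g = Finpartition.ofSetoid (Setoid.ker g) from rfl,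
    Finpartition.mem_part_ofSetoid_iff_rel]
  simp [Setoid.ker, Function.onFun, eq_comm]

private lemma mem_parts_iff_part (P : Finpartition (univ : Finset α)) {p : Finset α} :
    p ∈ P.parts ↔ ∃ a, P.part a = p := by
  constructor
  · intro hp
    obtain ⟨a, _, ha⟩ := P.part_surjOn hp
    exact ⟨a, ha⟩
  · rintro ⟨a, rfl⟩
    exact P.part_mem.2 (mem_univ a)

private lemma mem_parts_fpart {g : α → β} (hg : Function.Surjective g) {p : Finset α} :
    p ∈ (fpart g).parts ↔ ∃ b, cls g b = p := by
  rw [mem_parts_iff_part]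
  constructor
  · rintro ⟨a, rfl⟩; exact ⟨g a, (part_fpart g a).symm⟩
  · rintro ⟨b, rfl⟩
    obtain ⟨a, rfl⟩ := hg b
    exact ⟨a, part_fpart g a⟩

private noncomputable def geFun (P : Finpartition (univ : Finset α))
    (e : β ≃ {p // p ∈ P.parts}) (a : α) : β :=
  e.symm ⟨P.part a, P.part_mem.2 (mem_univ a)⟩

private lemma cls_geFun (P : Finpartition (univ : Finset α))
    (e : β ≃ {p // p ∈ P.parts}) (b : β) : cls (geFun P e) b = (e b).1 := by
  ext a
  rw [mem_cls, geFun, Equiv.symm_apply_eq]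
  constructor
  · intro hy
    have h1 : P.part a = (e b).1 := congrArg Subtype.val hy
    exact h1 ▸ P.mem_part (mem_univ a)
  · intro ha
    exact Subtype.ext (P.part_eq_of_mem (e b).2 ha)

private lemma geFun_surj (P : Finpartition (univ : Finset α))
    (e : β ≃ {p // p ∈ P.parts}) : Function.Surjective (geFun P e) := by
  intro b
  obtain ⟨a, ha⟩ := P.nonempty_of_mem_parts (e b).2
  have : a ∈ cls (geFun P e) b := (cls_geFun P e b).symm ▸ ha
  exact ⟨a, mem_cls.mp this⟩

lemma card_fiberGE (h : ℕ) (hh : 1 ≤ h) :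
    Nat.card {g : α → β // ∀ b, h ≤ Nat.card {a // g a = b}} =
    (Fintype.card β).factorial *
      Nat.card {P : Finpartition (Finset.univ : Finset α) //
        P.parts.card = Fintype.card β ∧ ∀ p ∈ P.parts, h ≤ p.card} := by
  classical
  set k := Fintype.card β with hk
  set G := {g : α → β // ∀ b, h ≤ Nat.card {a // g a = b}} with hG
  set Pt := {P : Finpartition (Finset.univ : Finset α) //
        P.parts.card = k ∧ ∀ p ∈ P.parts, h ≤ p.card} with hPt
  have hcls : ∀ g : G, ∀ b, h ≤ (cls g.1 b).card := by
    intro g b; rw [← natCard_fiber_eq]; exact g.2 b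
  have hne : ∀ g : G, ∀ b, (cls g.1 b).Nonempty := by
    intro g b
    exact Finset.card_pos.mp (lt_of_lt_of_le hh (hcls g b))
  have hsurj : ∀ g : G, Function.Surjective g.1 := by
    intro g b
    obtain ⟨a, ha⟩ := hne g b
    exact ⟨a, mem_cls.mp ha⟩
  have hclsinj : ∀ g : G, Function.Injective (cls g.1) := by
    intro g b b' hbb
    obtain ⟨a, ha⟩ := hne g b
    have ha' : a ∈ cls g.1 b' := hbb ▸ ha
    rw [← mem_cls.mp ha, ← mem_cls.mp ha']
  have πd : ∀ g : G, (fpart g.1).parts.card = k ∧ ∀ p ∈ (fpart g.1).parts, h ≤ p.card := by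
    intro g
    have himg : (fpart g.1).parts = univ.image (cls g.1) := by
      ext p
      rw [mem_parts_fpart (hsurj g)]
      simp [eq_comm]
    constructor
    · rw [himg, Finset.card_image_of_injective _ (hclsinj g), Finset.card_univ]
    · intro p hp
      rw [himg, Finset.mem_image] at hp
      obtain ⟨b, _, rfl⟩ := hp
      exact hcls g b
  set π : G → Pt := fun g => ⟨fpart g.1, πd g⟩ with hπ
  have main : ∀ P : Pt, Nat.card {g : G // π g = P} = k.factorial := by
    intro P
    have gcond : ∀ (e : β ≃ {p // p ∈ P.1.parts}) (b : β),
        h ≤ Nat.card {a // geFun P.1 e a = b} := by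
      intro e b
      rw [natCard_fiber_eq, cls_geFun]
      exact P.2.2 _ (e b).2
    have gπ : ∀ e : β ≃ {p // p ∈ P.1.parts}, π ⟨geFun P.1 e, gcond e⟩ = P := by
      intro e
      apply Subtype.ext
      apply Finpartition.ext
      ext p
      show p ∈ (fpart (geFun P.1 e)).parts ↔ p ∈ P.1.parts
      rw [mem_parts_fpart (geFun_surj P.1 e)]
      constructor
      · rintro ⟨b, rfl⟩
        rw [cls_geFun]
        exact (e b).2
      · intro hp
        exact ⟨e.symm ⟨p, hp⟩, by rw [cls_geFun, Equiv.apply_symm_apply]⟩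
    have parts_eq : ∀ g : {g : G // π g = P}, (fpart g.1.1).parts = P.1.parts := by
      intro g
      exact congrArg (fun Q : Pt => Q.1.parts) g.2
    have memcls : ∀ (g : {g : G // π g = P}) (b : β), cls g.1.1 b ∈ P.1.parts := by
      intro g b
      rw [← parts_eq g]
      exact (mem_parts_fpart (hsurj g.1)).2 ⟨b, rfl⟩
    have surjcls : ∀ g : {g : G // π g = P},
        Function.Surjective (fun b => (⟨cls g.1.1 b, memcls g b⟩ : {p // p ∈ P.1.parts})) := by
      rintro g ⟨p, hp⟩
      rw [← parts_eq g, mem_parts_fpart (hsurj g.1)] at hp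
      obtain ⟨b, rfl⟩ := hp
      exact ⟨b, rfl⟩
    have fe : {g : G // π g = P} ≃ (β ≃ {p // p ∈ P.1.parts}) := by
      refine
        { toFun := fun g => Equiv.ofBijective (fun b => ⟨cls g.1.1 b, memcls g b⟩)
            ⟨fun b b' hb => hclsinj g.1 (congrArg Subtype.val hb), surjcls g⟩
          invFun := fun e => ⟨⟨geFun P.1 e, gcond e⟩, gπ e⟩
          left_inv := ?_
          right_inv := ?_ }
      · intro g
        apply Subtype.ext
        apply Subtype.ext
        funext a
        show geFun P.1 _ a = g.1.1 a
        rw [geFun, Equiv.symm_apply_eq]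
        apply Subtype.ext
        show P.1.part a = cls g.1.1 (g.1.1 a)
        have hP1 : P.1 = fpart g.1.1 := (congrArg Subtype.val g.2).symm
        rw [hP1, part_fpart]
      · intro e
        apply Equiv.ext
        intro b
        apply Subtype.ext
        show cls (geFun P.1 e) b = (e b).1
        exact cls_geFun P.1 e b
    rw [Nat.card_congr fe, Nat.card_eq_fintype_card,
      Fintype.card_equiv (Fintype.equivOfCardEq (by rw [Fintype.card_coe, P.2.1]))]
  have natCard_sigma : Nat.card (Σ P : Pt, {g : G // π g = P}) =
      ∑ P : Pt, Nat.card {g : G // π g = P} := by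
    letI : ∀ P : Pt, Fintype {g : G // π g = P} := fun P => Fintype.ofFinite _
    rw [Nat.card_eq_fintype_card, Fintype.card_sigma]
    exact Finset.sum_congr rfl fun P _ => (Nat.card_eq_fintype_card).symm
  calc Nat.card G = Nat.card (Σ P : Pt, {g : G // π g = P}) :=
        (Nat.card_congr (Equiv.sigmaFiberEquiv π)).symm
    _ = ∑ P : Pt, Nat.card {g : G // π g = P} := natCard_sigma
    _ = ∑ _P : Pt, k.factorial := Finset.sum_congr rfl fun P _ => main P
    _ = Nat.card Pt * k.factorial := by
        rw [Finset.sum_const, smul_eq_mul, Finset.card_univ, Nat.card_eq_fintype_card]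
    _ = k.factorial * Nat.card Pt := Nat.mul_comm _ _

end Core


lemma card_fiberGE_congr {α α' β β' : Type*} (h : ℕ) (e1 : α ≃ α') (e2 : β ≃ β') :
    Nat.card {g : α → β // ∀ b, h ≤ Nat.card {a // g a = b}} =
    Nat.card {g : α' → β' // ∀ b, h ≤ Nat.card {a // g a = b}} := by
  apply Nat.card_congr
  refine Equiv.subtypeEquiv (e1.arrowCongr e2) fun g => ?_
  have key : ∀ b' : β', Nat.card {a' // (e1.arrowCongr e2) g a' = b'} =
      Nat.card {a // g a = e2.symm b'} := by
    intro b'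
    refine (Nat.card_congr (e1.subtypeEquiv fun a => ?_)).symm
    simp [Equiv.arrowCongr, Equiv.eq_symm_apply]
  constructor
  · intro hg b'
    rw [key]; exact hg _
  · intro hg b
    have := hg (e2 b)
    rwa [key, e2.symm_apply_apply] at this

lemma natCard_sigma' {ι : Type*} [Fintype ι] (F : ι → Type*) [∀ i, Finite (F i)] :
    Nat.card (Σ i, F i) = ∑ i, Nat.card (F i) := by
  classical
  letI : ∀ i, Fintype (F i) := fun i => Fintype.ofFinite _
  rw [Nat.card_eq_fintype_card, Fintype.card_sigma]
  exact Finset.sum_congr rfl fun i _ => (Nat.card_eq_fintype_card).symm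

lemma card_subsets_not_mem {γ : Type*} [Fintype γ] [DecidableEq γ] (x : γ) (r : ℕ) :
    Nat.card {A : Finset γ // x ∉ A ∧ A.card = r} = (Fintype.card γ - 1).choose r := by
  classical
  rw [Nat.card_eq_fintype_card, Fintype.card_subtype]
  have hset : univ.filter (fun A : Finset γ => x ∉ A ∧ A.card = r)
      = (univ.erase x).powersetCard r := by
    ext A
    simp [Finset.mem_powersetCard, Finset.subset_erase, Finset.subset_univ]
  rw [hset, Finset.card_powersetCard, Finset.card_erase_of_mem (mem_univ x), Finset.card_univ]

/-- `Sge h n k` is the number of partitions of an `n`-set into exactly `k` blocks,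
each block of size at least `h`. -/
noncomputable def Sge (h n k : ℕ) : ℕ :=
  Nat.card {P : Finpartition (Finset.univ : Finset (Fin n)) //
    P.parts.card = k ∧ ∀ p ∈ P.parts, h ≤ p.card}

/-- In the coupon collector problem with `d` kinds, where the collector stops upon having
at least `h` copies of every kind, the probability of stopping at exactly trial `n` is
`p_n = (d!/d^n) C(n-1,h-1) S_{≥h}(n-h, d-1)`. -/
theorem h_copies_stopping_probability (d h n : ℕ) (hd : 1 ≤ d) (hh : 1 ≤ h) (hn : 1 ≤ n) :
    ((Nat.card {f : Fin n → Fin d //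
        (∀ c : Fin d, h ≤ (Finset.univ.filter fun i : Fin n => f i = c).card) ∧
        ¬ (∀ c : Fin d,
            h ≤ (Finset.univ.filter fun i : Fin n => (i : ℕ) < n - 1 ∧ f i = c).card)} : ℕ) : ℝ)
        / (d : ℝ) ^ n
      = (Nat.factorial d : ℝ) / (d : ℝ) ^ n * (Nat.choose (n - 1) (h - 1) : ℝ) *
          (Sge h (n - h) (d - 1) : ℝ) := by
  classical
  set L : Fin n := ⟨n - 1, by omega⟩ with hL
  have hfilter : ∀ (f : Fin n → Fin d) (c : Fin d),
      (Finset.univ.filter fun i : Fin n => (i : ℕ) < n - 1 ∧ f i = c)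
        = (Finset.univ.filter fun i : Fin n => f i = c).erase L := by
    intro f c
    ext i
    have hiv : (i : ℕ) < n := i.2
    simp only [mem_filter, mem_univ, true_and, mem_erase]
    constructor
    · rintro ⟨h1, h2⟩
      refine ⟨fun hEq => ?_, h2⟩
      rw [hEq] at h1
      simp only [hL] at h1
      omega
    · rintro ⟨h1, h2⟩
      refine ⟨?_, h2⟩
      have hne : (i : ℕ) ≠ n - 1 := fun hEq => h1 (Fin.ext (by rw [hEq, hL]))
      omega
  have cntNat : ∀ (f : Fin n → Fin d) (c : Fin d),
      (Finset.univ.filter fun i : Fin n => f i = c).card = Nat.card {j : Fin n // f j = c} := by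
    intro f c
    rw [Nat.card_eq_fintype_card, Fintype.card_subtype]
  have hcond : ∀ f : Fin n → Fin d,
      ((∀ c : Fin d, h ≤ (Finset.univ.filter fun i : Fin n => f i = c).card) ∧
        ¬ (∀ c : Fin d,
            h ≤ (Finset.univ.filter fun i : Fin n => (i : ℕ) < n - 1 ∧ f i = c).card)) ↔
      ((∀ c : Fin d, h ≤ (Finset.univ.filter fun i : Fin n => f i = c).card) ∧
        (Finset.univ.filter fun i : Fin n => f i = f L).card = h) := by
    intro f
    constructor
    · rintro ⟨h1, h2⟩
      refine ⟨h1, ?_⟩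
      by_contra hne
      apply h2
      intro c
      rw [hfilter]
      by_cases hc : c = f L
      · subst hc
        rw [Finset.card_erase_of_mem (by simp)]
        have := h1 (f L)
        omega
      · rw [Finset.erase_eq_of_notMem (by simp [Ne.symm hc])]
        exact h1 c
    · rintro ⟨h1, h2⟩
      refine ⟨h1, ?_⟩
      intro hall
      have := hall (f L)
      rw [hfilter, Finset.card_erase_of_mem (by simp), h2] at this
      omega
  set T := {f : Fin n → Fin d //
      (∀ c : Fin d, h ≤ (Finset.univ.filter fun i : Fin n => f i = c).card) ∧
      (Finset.univ.filter fun i : Fin n => f i = f L).card = h} with hT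
  have step0 : Nat.card {f : Fin n → Fin d //
        (∀ c : Fin d, h ≤ (Finset.univ.filter fun i : Fin n => f i = c).card) ∧
        ¬ (∀ c : Fin d,
            h ≤ (Finset.univ.filter fun i : Fin n => (i : ℕ) < n - 1 ∧ f i = c).card)}
      = Nat.card T :=
    Nat.card_congr (Equiv.subtypeEquivRight hcond)
  set SubA := {A : Finset (Fin n) // L ∉ A ∧ A.card = h - 1} with hSubA
  have ΦA : ∀ F : T, L ∉ (Finset.univ.filter fun i : Fin n => F.1 i = F.1 L).erase L ∧
      ((Finset.univ.filter fun i : Fin n => F.1 i = F.1 L).erase L).card = h - 1 := by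
    intro F
    refine ⟨Finset.notMem_erase _ _, ?_⟩
    rw [Finset.card_erase_of_mem (by simp), F.2.2]
  set Φ : T → Fin d × SubA := fun F =>
    (F.1 L, ⟨(Finset.univ.filter fun i : Fin n => F.1 i = F.1 L).erase L, ΦA F⟩) with hΦ
  have fib : ∀ x : Fin d × SubA,
      Nat.card {F : T // Φ F = x} = (d - 1).factorial * Sge h (n - h) (d - 1) := by
    rintro ⟨c, A⟩
    have hins : (insert L A.1).card = h := by
      rw [Finset.card_insert_of_notMem A.2.1, A.2.2]
      exact Nat.succ_pred_eq_of_pos hh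
    have hFa : ∀ F : T, Φ F = (c, A) → F.1 L = c := fun F hx => congrArg Prod.fst hx
    have hFb : ∀ F : T, Φ F = (c, A) →
        (Finset.univ.filter fun i : Fin n => F.1 i = F.1 L).erase L = A.1 :=
      fun F hx => congrArg (fun y : Fin d × SubA => y.2.1) hx
    have memIff : ∀ f : Fin n → Fin d, f L = c →
        ((Finset.univ.filter fun i : Fin n => f i = f L).erase L = A.1) →
        ∀ j : Fin n, f j = c ↔ j ∈ insert L A.1 := by
      intro f hfL hA j
      constructor
      · intro hj
        by_cases hjL : j = L
        · simp [hjL]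
        · refine Finset.mem_insert.mpr (Or.inr ?_)
          rw [← hA]
          exact Finset.mem_erase.mpr ⟨hjL, by simp [hj, hfL]⟩
      · intro hj
        rcases Finset.mem_insert.mp hj with hjL | hjA
        · rw [hjL, hfL]
        · rw [← hA] at hjA
          have := (Finset.mem_filter.mp (Finset.mem_of_mem_erase hjA)).2
          rw [this, hfL]
    have fibEq : ∀ (f : Fin n → Fin d), (∀ j, f j = c ↔ j ∈ insert L A.1) →
        ∀ c' : Fin d, c' ≠ c →
        Nat.card {i : {i : Fin n // i ∉ insert L A.1} // f i.1 = c'}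
          = Nat.card {j : Fin n // f j = c'} := by
      intro f hf c' hc'
      refine Nat.card_congr
        (@Equiv.subtypeSubtypeEquivSubtype _ (fun i : Fin n => i ∉ insert L A.1)
          (fun j : Fin n => f j = c') ?_)
      intro j hj hmem
      exact hc' (hj ▸ (hf j).mpr hmem)
    have filterc : ∀ (f : Fin n → Fin d), (∀ j, f j = c ↔ j ∈ insert L A.1) →
        (Finset.univ.filter fun i : Fin n => f i = c) = insert L A.1 := by
      intro f hf
      ext j
      simp [hf j]
    -- the "build" map from restricted functions back to full functions
    set bld : ({i : Fin n // i ∉ insert L A.1} → {c' : Fin d // c' ≠ c}) → Fin n → Fin d :=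
      fun g j => if hj : j ∈ insert L A.1 then c else (g ⟨j, hj⟩).1 with hbld
    have bldIff : ∀ g, ∀ j : Fin n, bld g j = c ↔ j ∈ insert L A.1 := by
      intro g j
      by_cases hj : j ∈ insert L A.1
      · rw [hbld]
        simp only [dif_pos hj]
        simp [hj]
      · rw [hbld]
        simp only [dif_neg hj]
        exact ⟨fun hc => absurd hc (g ⟨j, hj⟩).2, fun hmem => absurd hmem hj⟩
    have bldL : ∀ g, bld g L = c := fun g => (bldIff g L).mpr (Finset.mem_insert_self _ _)
    have bldRestrict : ∀ g (i : {i : Fin n // i ∉ insert L A.1}), bld g i.1 = (g i).1 := by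
      intro g i
      rw [hbld]
      simp only [dif_neg i.2]
    have bldcond : ∀ g, (∀ b, h ≤ Nat.card {a // g a = b}) →
        (∀ c'' : Fin d, h ≤ (Finset.univ.filter fun i : Fin n => bld g i = c'').card) ∧
        (Finset.univ.filter fun i : Fin n => bld g i = bld g L).card = h := by
      intro g hg
      have hfc : (Finset.univ.filter fun i : Fin n => bld g i = c) = insert L A.1 :=
        filterc (bld g) (bldIff g)
      constructor
      · intro c''
        by_cases hc'' : c'' = c
        · subst hc''
          rw [hfc, hins]
        · rw [cntNat, ← fibEq (bld g) (bldIff g) c'' hc'']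
          refine le_trans (hg ⟨c'', hc''⟩) (le_of_eq (Nat.card_congr
            (Equiv.subtypeEquivRight fun a => ?_)))
          rw [bldRestrict g a, Subtype.ext_iff]
      · rw [bldL, hfc, hins]
    have bldΦ : ∀ g (F : T), F.1 = bld g → Φ F = (c, A) := by
      intro g F hF
      have h1 : F.1 L = c := by rw [hF, bldL]
      have hfc : (Finset.univ.filter fun i : Fin n => F.1 i = F.1 L) = insert L A.1 := by
        rw [h1, hF]
        exact filterc (bld g) (bldIff g)
      have h2 : (Finset.univ.filter fun i : Fin n => F.1 i = F.1 L).erase L = A.1 := by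
        rw [hfc, Finset.erase_insert A.2.1]
      rw [hΦ]
      exact Prod.ext h1 (Subtype.ext h2)
    have feq : {F : T // Φ F = (c, A)} ≃
        {g : {i : Fin n // i ∉ insert L A.1} → {c' : Fin d // c' ≠ c} //
          ∀ b, h ≤ Nat.card {a // g a = b}} :=
      { toFun := fun F =>
          ⟨fun i => ⟨F.1.1 i.1, fun hc =>
              i.2 ((memIff F.1.1 (hFa F.1 F.2) (hFb F.1 F.2) i.1).mp hc)⟩, by
            rintro ⟨c', hc'⟩
            have h3 := F.1.2.1 c'
            rw [cntNat, ← fibEq F.1.1 (memIff F.1.1 (hFa F.1 F.2) (hFb F.1 F.2)) c' hc'] at h3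
            refine le_trans h3 (le_of_eq (Nat.card_congr
              (Equiv.subtypeEquivRight fun a => ?_)))
            rw [Subtype.ext_iff]⟩
        invFun := fun g => ⟨⟨bld g.1, bldcond g.1 g.2⟩, bldΦ g.1 _ rfl⟩
        left_inv := by
          intro F
          apply Subtype.ext
          apply Subtype.ext
          funext j
          show bld _ j = F.1.1 j
          by_cases hj : j ∈ insert L A.1
          · rw [hbld]
            simp only [dif_pos hj]
            exact ((memIff F.1.1 (hFa F.1 F.2) (hFb F.1 F.2) j).mpr hj).symm
          · rw [hbld]
            simp only [dif_neg hj]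
        right_inv := by
          intro g
          apply Subtype.ext
          funext i
          apply Subtype.ext
          show bld g.1 i.1 = (g.1 i).1
          exact bldRestrict g.1 i }
    rw [Nat.card_congr feq]
    have e1 : {i : Fin n // i ∉ insert L A.1} ≃ Fin (n - h) := by
      refine Fintype.equivFinOfCardEq ?_
      have h1 : Fintype.card {i : Fin n // i ∈ insert L A.1} = h := by
        simpa [-Finset.mem_insert] using hins
      rw [Fintype.card_subtype_compl, h1, Fintype.card_fin]
    have e2 : {c' : Fin d // c' ≠ c} ≃ Fin (d - 1) := by
      refine Fintype.equivFinOfCardEq ?_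
      rw [Fintype.card_subtype_compl, Fintype.card_fin, Fintype.card_subtype_eq]
    rw [card_fiberGE_congr h e1 e2, card_fiberGE h hh, Fintype.card_fin]
    rfl
  have hA : Fintype.card SubA = (n - 1).choose (h - 1) := by
    rw [← Nat.card_eq_fintype_card, hSubA, card_subsets_not_mem L (h - 1), Fintype.card_fin]
  have key : Nat.card T = d.factorial * (n - 1).choose (h - 1) * Sge h (n - h) (d - 1) := by
    calc Nat.card T = Nat.card (Σ x : Fin d × SubA, {F : T // Φ F = x}) :=
          (Nat.card_congr (Equiv.sigmaFiberEquiv Φ)).symm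
      _ = ∑ x : Fin d × SubA, Nat.card {F : T // Φ F = x} := natCard_sigma' _
      _ = ∑ _x : Fin d × SubA, (d - 1).factorial * Sge h (n - h) (d - 1) :=
          Finset.sum_congr rfl fun x _ => fib x
      _ = (d * (n - 1).choose (h - 1)) * ((d - 1).factorial * Sge h (n - h) (d - 1)) := by
          rw [Finset.sum_const, smul_eq_mul, Finset.card_univ, Fintype.card_prod,
            Fintype.card_fin, hA]
      _ = d.factorial * (n - 1).choose (h - 1) * Sge h (n - h) (d - 1) := by
          have hfact : d * (d - 1).factorial = d.factorial :=
            Nat.mul_factorial_pred (by omega)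
          rw [← hfact]
          ring
  rw [step0, key]
  push_cast
  ring
end
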